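/- For every n ∈ ℕ, the product L_n · L^{-1} equals the (n+1)×(n+1) identity matrix, where L_n is the weight matrix of the L-type network of order n and L^{-1} is the weight matrix of the same network under the inverse weighting. -/

import Mathlib

/-- The heights of an `L^m_n`-path of order `n` (the abscissas `x i = m + i` are
determined, so only the heights `y i ∈ {0, …, n}`, encoded as `Fin (n+1)`, are recorded):
`y (k+1) ∈ {y k, y k - 1}` and a fall step at position `k` forces `y k ≥ n - k`. -/
def IsLPath (n : ℕ) (y : Fin (n + 1) → Fin (n + 1)) : Prop :=
  ∀ k : Fin n,
    ((y k.succ = y k.castSucc ∨ (y k.succ : ℕ) + 1 = (y k.castSucc : ℕ)) ∧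
      ((y k.succ : ℕ) + 1 = (y k.castSucc : ℕ) → n - (k : ℕ) ≤ (y k.castSucc : ℕ)))

/-- The weight of an `L`-type path: a fall step from `(k, j)` to `(k+1, j-1)` has weight
`t j (k + j - n)` and a horizontal step has weight `1`; the weight of the path is the
product of the weights of its steps. -/
def lweight {R : Type*} [CommRing R] (n : ℕ) (t : ℕ → ℕ → R)
    (y : Fin (n + 1) → Fin (n + 1)) : R :=
  ∏ k : Fin n,
    if (y k.succ : ℕ) + 1 = (y k.castSucc : ℕ)
    then t (y k.castSucc : ℕ) ((k : ℕ) + (y k.castSucc : ℕ) - n) else 1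

open scoped Classical in
/-- The matrix `L n`: its `(i, j)` entry is the sum of the weights of all `L^0_n`-paths
with `y 0 = i` and `y n = j`. -/
noncomputable def Lmat {R : Type*} [CommRing R] (n : ℕ) (t : ℕ → ℕ → R) :
    Matrix (Fin (n + 1)) (Fin (n + 1)) R :=
  Matrix.of fun i j =>
    ∑ y ∈ Finset.univ.filter
        (fun y : Fin (n + 1) → Fin (n + 1) => IsLPath n y ∧ y 0 = i ∧ y (Fin.last n) = j),
      lweight n t y

/-- The inverse weighting of an `L`-type path: a fall step from `(k, j)` to
`(k+1, j-1)` has weight `-t j (n - k - 1)` and a horizontal step has weight `1`; the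
weight of the path is the product of the weights of its steps. -/
def linvweight {R : Type*} [CommRing R] (n : ℕ) (t : ℕ → ℕ → R)
    (y : Fin (n + 1) → Fin (n + 1)) : R :=
  ∏ k : Fin n,
    if (y k.succ : ℕ) + 1 = (y k.castSucc : ℕ)
    then -t (y k.castSucc : ℕ) (n - (k : ℕ) - 1) else 1

open scoped Classical in
/-- The matrix `L⁻¹`: its `(i, j)` entry is the sum of the inverse weights of all
`L^0_n`-paths with `y 0 = i` and `y n = j`. -/
noncomputable def LinvMat {R : Type*} [CommRing R] (n : ℕ) (t : ℕ → ℕ → R) :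
    Matrix (Fin (n + 1)) (Fin (n + 1)) R :=
  Matrix.of fun i j =>
    ∑ y ∈ Finset.univ.filter
        (fun y : Fin (n + 1) → Fin (n + 1) => IsLPath n y ∧ y 0 = i ∧ y (Fin.last n) = j),
      linvweight n t y

namespace LP

variable (n : ℕ)

def fidx (s : ℕ) : Fin (n + 1) := ⟨min s n, by omega⟩

def Yv (y : Fin (n + 1) → Fin (n + 1)) (s : ℕ) : ℕ := (y (fidx n s) : ℕ)

variable {n}

lemma fidx_coe (s : Fin (n + 1)) : fidx n (s : ℕ) = s := by
  apply Fin.ext; simp [fidx, Nat.min_eq_left (Fin.is_le s)]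

lemma Yv_coe (y : Fin (n + 1) → Fin (n + 1)) (s : Fin (n + 1)) :
    Yv n y (s : ℕ) = (y s : ℕ) := by rw [Yv, fidx_coe]

lemma Yv_le (y : Fin (n + 1) → Fin (n + 1)) (s : ℕ) : Yv n y s ≤ n := Fin.is_le _

lemma Yv_stab (y : Fin (n + 1) → Fin (n + 1)) {s : ℕ} (hs : n ≤ s) :
    Yv n y s = Yv n y n := by
  simp [Yv, fidx, Nat.min_eq_right hs]

lemma Yv_succ (y : Fin (n + 1) → Fin (n + 1)) (k : Fin n) :
    Yv n y ((k : ℕ) + 1) = (y k.succ : ℕ) := by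
  have : fidx n ((k : ℕ) + 1) = Fin.succ k := by
    apply Fin.ext; simp only [fidx, Fin.val_succ]; omega
  rw [Yv, this]

lemma Yv_castSucc (y : Fin (n + 1) → Fin (n + 1)) (k : Fin n) :
    Yv n y (k : ℕ) = (y k.castSucc : ℕ) := by
  have : fidx n (k : ℕ) = Fin.castSucc k := by
    apply Fin.ext; simp only [fidx, Fin.coe_castSucc]; omega
  rw [Yv, this]

lemma isLPath_iff (y : Fin (n + 1) → Fin (n + 1)) :
    IsLPath n y ↔ ∀ k : ℕ, k < n →
      ((Yv n y (k + 1) = Yv n y k ∨ Yv n y (k + 1) + 1 = Yv n y k) ∧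
        (Yv n y (k + 1) + 1 = Yv n y k → n - k ≤ Yv n y k)) := by
  constructor
  · intro h k hk
    have := h ⟨k, hk⟩
    rw [Fin.ext_iff] at this
    rw [show k = ((⟨k, hk⟩ : Fin n) : ℕ) from rfl, Yv_succ, Yv_castSucc]
    exact this
  · intro h k
    have := h (k : ℕ) k.isLt
    rw [Yv_succ, Yv_castSucc] at this
    exact ⟨Or.imp Fin.ext id this.1, this.2⟩

/-- a fall can only happen strictly before `n` -/
lemma fall_lt {y : Fin (n + 1) → Fin (n + 1)} {k : ℕ}
    (h : Yv n y (k + 1) + 1 = Yv n y k) : k < n := by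
  by_contra hk
  rw [Yv_stab y (show n ≤ k + 1 by omega), Yv_stab y (show n ≤ k by omega)] at h
  omega

lemma Yv_const {y : Fin (n + 1) → Fin (n + 1)} (hy : IsLPath n y) {s u : ℕ}
    (hsu : s ≤ u) (h : ∀ k, s ≤ k → k < u → ¬(Yv n y (k + 1) + 1 = Yv n y k)) :
    Yv n y u = Yv n y s := by
  induction u with
  | zero => rw [show s = 0 by omega]
  | succ u ih =>
    rcases Nat.eq_or_lt_of_le hsu with he | hlt
    · rw [he]
    · have hsu' : s ≤ u := by omega
      have ihu : Yv n y u = Yv n y s := ih hsu' (fun k hk hk2 => h k hk (by omega))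
      have e : Yv n y (u + 1) = Yv n y u := by
        rcases Nat.lt_or_ge u n with hun | hun
        · have step := ((isLPath_iff y).1 hy u hun).1
          have hnf := h u hsu' (by omega)
          tauto
        · rw [Yv_stab y (show n ≤ u + 1 by omega), Yv_stab y hun]
      rw [e, ihu]

lemma Yv_mono {y : Fin (n + 1) → Fin (n + 1)} (hy : IsLPath n y) {s u : ℕ}
    (hsu : s ≤ u) : Yv n y u ≤ Yv n y s := by
  induction u with
  | zero => rw [show s = 0 by omega]
  | succ u ih =>
    rcases Nat.eq_or_lt_of_le hsu with he | hlt
    · rw [he]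
    · have ihu := ih (by omega)
      have e : Yv n y (u + 1) ≤ Yv n y u := by
        rcases Nat.lt_or_ge u n with hun | hun
        · have step := ((isLPath_iff y).1 hy u hun).1
          omega
        · rw [Yv_stab y (show n ≤ u + 1 by omega), Yv_stab y hun]
      omega


variable {R : Type*} [CommRing R]

lemma lweight_eq (t : ℕ → ℕ → R) (y : Fin (n + 1) → Fin (n + 1)) :
    lweight n t y = ∏ k ∈ Finset.range n,
      (if Yv n y (k + 1) + 1 = Yv n y k then t (Yv n y k) (k + Yv n y k - n) else 1) := by
  rw [lweight, ← Fin.prod_univ_eq_prod_range]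
  exact Finset.prod_congr rfl (fun k _ => by rw [Yv_succ, Yv_castSucc])

lemma linvweight_eq (t : ℕ → ℕ → R) (y : Fin (n + 1) → Fin (n + 1)) :
    linvweight n t y = ∏ k ∈ Finset.range n,
      (if Yv n y (k + 1) + 1 = Yv n y k then -t (Yv n y k) (n - k - 1) else 1) := by
  rw [linvweight, ← Fin.prod_univ_eq_prod_range]
  exact Finset.prod_congr rfl (fun k _ => by rw [Yv_succ, Yv_castSucc])

variable (n)

def HasFall (y : Fin (n + 1) → Fin (n + 1)) : Prop :=
  ∃ k, Yv n y (k + 1) + 1 = Yv n y k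

open scoped Classical in
noncomputable def k1 (p : Fin (n + 1) → Fin (n + 1)) : ℕ :=
  Nat.findGreatest (fun k => Yv n p (k + 1) + 1 = Yv n p k) n

noncomputable def k2 (q : Fin (n + 1) → Fin (n + 1)) : ℕ :=
  sInf {k | Yv n q (k + 1) + 1 = Yv n q k}

/-- The decision predicate : move the last fall of `p` to `q`. -/
def Dec (pq : (Fin (n + 1) → Fin (n + 1)) × (Fin (n + 1) → Fin (n + 1))) : Prop :=
  HasFall n pq.1 ∧ (¬ HasFall n pq.2 ∨
    n - 1 - k2 n pq.2 < k1 n pq.1 + Yv n pq.1 n + 1 - n)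

noncomputable def moveQ (pq : (Fin (n + 1) → Fin (n + 1)) × (Fin (n + 1) → Fin (n + 1))) :
    (Fin (n + 1) → Fin (n + 1)) × (Fin (n + 1) → Fin (n + 1)) :=
  ((fun s => if (s : ℕ) ≤ k1 n pq.1 then pq.1 s else pq.1 (fidx n (k1 n pq.1))),
   (fun s => if (s : ℕ) ≤ 2 * n - 1 - Yv n pq.1 (k1 n pq.1) - k1 n pq.1
      then pq.1 (fidx n (k1 n pq.1)) else pq.2 s))

noncomputable def moveP (pq : (Fin (n + 1) → Fin (n + 1)) × (Fin (n + 1) → Fin (n + 1))) :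
    (Fin (n + 1) → Fin (n + 1)) × (Fin (n + 1) → Fin (n + 1)) :=
  ((fun s => if (s : ℕ) ≤ 2 * n - 1 - k2 n pq.2 - Yv n pq.2 (k2 n pq.2)
      then pq.1 s else pq.2 (fidx n (k2 n pq.2 + 1))),
   (fun s => if (s : ℕ) ≤ k2 n pq.2 then pq.2 (fidx n (k2 n pq.2 + 1)) else pq.2 s))

def Good (i j : Fin (n + 1)) (pq : (Fin (n + 1) → Fin (n + 1)) × (Fin (n + 1) → Fin (n + 1))) :
    Prop :=
  IsLPath n pq.1 ∧ IsLPath n pq.2 ∧ pq.1 0 = i ∧ pq.2 (Fin.last n) = j ∧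
    pq.1 (Fin.last n) = pq.2 0

variable {n}

lemma not_hasFall_const {y : Fin (n + 1) → Fin (n + 1)} (hy : IsLPath n y)
    (h : ¬ HasFall n y) (s : ℕ) : Yv n y s = Yv n y 0 :=
  Yv_const hy (Nat.zero_le s) (fun k _ _ hk => h ⟨k, hk⟩)

section k1facts
variable {p : Fin (n + 1) → Fin (n + 1)} (hp : IsLPath n p) (hf : HasFall n p)
include hf

lemma k1_fall : Yv n p (k1 n p + 1) + 1 = Yv n p (k1 n p) := by
  classical
  obtain ⟨k, hk⟩ := hf
  exact Nat.findGreatest_spec (P := fun k => Yv n p (k + 1) + 1 = Yv n p k)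
    (le_of_lt (fall_lt hk)) hk

lemma k1_lt : k1 n p < n := fall_lt (k1_fall hf)

omit hf
lemma k1_max {k : ℕ} (h : k1 n p < k) : ¬ (Yv n p (k + 1) + 1 = Yv n p k) := by
  classical
  intro hk
  exact Nat.findGreatest_is_greatest (P := fun k => Yv n p (k + 1) + 1 = Yv n p k)
    h (le_of_lt (fall_lt hk)) hk
include hf

include hp

/-- after `k1`, `p` is constant, equal to its final value -/
lemma k1_tail {s : ℕ} (hs : k1 n p < s) : Yv n p s = Yv n p n := by
  have hk1 := k1_lt hf
  have h1 : Yv n p s = Yv n p (k1 n p + 1) :=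
    Yv_const hp (by omega) (fun k hk _ => k1_max (by omega))
  have h2 : Yv n p n = Yv n p (k1 n p + 1) :=
    Yv_const hp (by omega) (fun k hk _ => k1_max (by omega))
  rw [h1, h2]

lemma k1_val : Yv n p (k1 n p) = Yv n p n + 1 := by
  have h := k1_fall hf
  rw [k1_tail hp hf (by omega)] at h
  omega

/-- validity of the fall at `k1` : `n - k1 ≤ Yv p k1 = m + 1` -/
lemma k1_valid : n ≤ k1 n p + Yv n p n + 1 := by
  have h := ((isLPath_iff p).1 hp (k1 n p) (k1_lt hf)).2 (k1_fall hf)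
  rw [k1_val hp hf] at h
  omega

end k1facts

section k2facts
variable {q : Fin (n + 1) → Fin (n + 1)} (hq : IsLPath n q) (hf : HasFall n q)
include hf

lemma k2_fall : Yv n q (k2 n q + 1) + 1 = Yv n q (k2 n q) :=
  Nat.sInf_mem (s := {k | Yv n q (k + 1) + 1 = Yv n q k}) hf

lemma k2_lt : k2 n q < n := fall_lt (k2_fall hf)

omit hf
lemma k2_min {k : ℕ} (h : k < k2 n q) : ¬ (Yv n q (k + 1) + 1 = Yv n q k) :=
  Nat.notMem_of_lt_sInf (s := {k | Yv n q (k + 1) + 1 = Yv n q k}) h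

/-- before and including `k2`, `q` is constant equal to its initial value -/
lemma k2_head (hq : IsLPath n q) {s : ℕ} (hs : s ≤ k2 n q) : Yv n q s = Yv n q 0 :=
  Yv_const hq (Nat.zero_le s) (fun k _ hk => k2_min (by omega))

include hf hq
lemma k2_val : Yv n q (k2 n q + 1) + 1 = Yv n q 0 := by
  rw [k2_fall hf, k2_head hq (le_refl _)]

lemma k2_valid : n ≤ k2 n q + Yv n q 0 := by
  have h := ((isLPath_iff q).1 hq (k2 n q) (k2_lt hf)).2 (k2_fall hf)
  rw [k2_head hq (le_refl _)] at h
  omega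

end k2facts

/-- value of `Yv` on an if-then-else modified path -/
lemma Yv_ite (p : Fin (n + 1) → Fin (n + 1)) (c : ℕ) (v : Fin (n + 1)) {s : ℕ} (hs : s ≤ n) :
    Yv n (fun u => if (u : ℕ) ≤ c then p u else v) s
      = if s ≤ c then Yv n p s else (v : ℕ) := by
  have h : ((fidx n s : Fin (n+1)) : ℕ) = s := by simp [fidx]; omega
  rw [Yv]
  simp only [h]
  split <;> rfl


lemma fidx_zero : fidx n 0 = (0 : Fin (n+1)) := by apply Fin.ext; simp [fidx]

lemma fidx_last : fidx n n = Fin.last n := by apply Fin.ext; simp [fidx]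

lemma Yv_zero (y : Fin (n + 1) → Fin (n + 1)) : Yv n y 0 = (y 0 : ℕ) := by
  rw [Yv, fidx_zero]

lemma Yv_last (y : Fin (n + 1) → Fin (n + 1)) : Yv n y n = (y (Fin.last n) : ℕ) := by
  rw [Yv, fidx_last]

/-- value of `Yv` on an if-then-else modified path, constant-first version -/
lemma Yv_ite' (p : Fin (n + 1) → Fin (n + 1)) (c : ℕ) (v : Fin (n + 1)) {s : ℕ} (hs : s ≤ n) :
    Yv n (fun u => if (u : ℕ) ≤ c then v else p u) s
      = if s ≤ c then (v : ℕ) else Yv n p s := by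
  have h : ((fidx n s : Fin (n+1)) : ℕ) = s := by simp [fidx]; omega
  rw [Yv]
  simp only [h]
  split <;> rfl

lemma moveQ_spec (t : ℕ → ℕ → R) {i j : Fin (n + 1)} {p q : Fin (n + 1) → Fin (n + 1)}
    (h : Good n i j (p, q)) (hD : Dec n (p, q)) :
    Good n i j (moveQ n (p, q)) ∧ ¬ Dec n (moveQ n (p, q)) ∧
      moveP n (moveQ n (p, q)) = (p, q) ∧
      lweight n t p * linvweight n t q
        + lweight n t (moveQ n (p, q)).1 * linvweight n t (moveQ n (p, q)).2 = 0 ∧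
      (moveQ n (p, q)).2 ≠ q := by
  obtain ⟨hp, hq, hp0, hqn, hlinkF⟩ := h
  obtain ⟨hfp, hDor⟩ := hD
  dsimp only at hp hq hp0 hqn hlinkF hfp hDor
  have hlink : Yv n p n = Yv n q 0 := by
    rw [Yv_last, Yv_zero]; exact congrArg Fin.val hlinkF
  set m : ℕ := Yv n p n with hm
  set K : ℕ := k1 n p with hKdef
  have hK : K < n := k1_lt hfp
  have hKf : Yv n p (K + 1) + 1 = Yv n p K := k1_fall hfp
  have hKval : Yv n p K = m + 1 := k1_val hp hfp
  have hKtail : ∀ s, K < s → Yv n p s = m := fun s hs => k1_tail hp hfp hs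
  have hKvalid : n ≤ K + m + 1 := k1_valid hp hfp
  have hmn : m + 1 ≤ n := hKval ▸ Yv_le p K
  set k' : ℕ := 2 * n - 1 - (m + 1) - K with hk'def
  have hthr : 2 * n - 1 - Yv n p (k1 n p) - k1 n p = k' := by rw [← hKdef, hKval]
  have hk'n : k' < n := by omega
  have hQ5 : ∀ s, s ≤ k' + 1 → Yv n q s = m := by
    intro s hs
    by_cases hfq : HasFall n q
    · have hb : n - 1 - k2 n q < K + m + 1 - n := by
        rcases hDor with hc | hc
        · exact absurd hfq hc
        · exact hc
      have hk2 : k2 n q < n := k2_lt hfq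
      have : s ≤ k2 n q := by omega
      rw [k2_head hq this, ← hlink]
    · rw [not_hasFall_const hq hfq s, ← hlink]
  -- the modified pair
  set P' : Fin (n + 1) → Fin (n + 1) :=
    fun s => if (s : ℕ) ≤ k1 n p then p s else p (fidx n (k1 n p)) with hP'def
  set Q' : Fin (n + 1) → Fin (n + 1) :=
    fun s => if (s : ℕ) ≤ 2 * n - 1 - Yv n p (k1 n p) - k1 n p
      then p (fidx n (k1 n p)) else q s with hQ'def
  have hmove : moveQ n (p, q) = (P', Q') := rfl
  have vP' : ∀ s, s ≤ n → Yv n P' s = if s ≤ K then Yv n p s else m + 1 := by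
    intro s hs
    rw [hP'def, ← hKdef, Yv_ite p K _ hs]
    split
    · rfl
    · show (p (fidx n K) : ℕ) = m + 1
      rw [show (p (fidx n K) : ℕ) = Yv n p K from rfl, hKval]
  have vQ' : ∀ s, s ≤ n → Yv n Q' s = if s ≤ k' then m + 1 else Yv n q s := by
    intro s hs
    rw [hQ'def, hthr, Yv_ite' q k' _ hs]
    split
    · show (p (fidx n K) : ℕ) = m + 1
      rw [show (p (fidx n K) : ℕ) = Yv n p K from rfl, hKval]
    · rfl
  have hp' : IsLPath n P' := by
    rw [isLPath_iff]
    intro k hk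
    rw [vP' (k + 1) (by omega), vP' k (by omega)]
    rcases Nat.lt_trichotomy k K with h1 | h1 | h1
    · rw [if_pos (by omega), if_pos (by omega)]
      exact (isLPath_iff p).1 hp k hk
    · rw [if_neg (by omega), if_pos (by omega), h1, hKval]
      omega
    · rw [if_neg (by omega), if_neg (by omega)]
      omega
  have hq' : IsLPath n Q' := by
    rw [isLPath_iff]
    intro k hk
    rw [vQ' (k + 1) (by omega), vQ' k (by omega)]
    rcases Nat.lt_trichotomy k k' with h1 | h1 | h1
    · rw [if_pos (by omega), if_pos (by omega)]
      omega
    · rw [if_neg (by omega), if_pos (by omega), hQ5 (k + 1) (by omega)]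
      omega
    · rw [if_neg (by omega), if_neg (by omega)]
      have := (isLPath_iff q).1 hq k hk
      omega
  have hgood : Good n i j (P', Q') := by
    refine ⟨hp', hq', ?_, ?_, ?_⟩
    · show (if ((0 : Fin (n+1)) : ℕ) ≤ k1 n p then p 0 else p (fidx n (k1 n p))) = i
      rw [if_pos (by simp)]
      exact hp0
    · show (if ((Fin.last n : Fin (n+1)) : ℕ) ≤ 2*n-1- Yv n p (k1 n p) - k1 n p then _ else q (Fin.last n)) = j
      rw [hthr, if_neg (by simp [Fin.last]; omega)]
      exact hqn
    · show (if ((Fin.last n : Fin (n+1)) : ℕ) ≤ k1 n p then p (Fin.last n) else p (fidx n (k1 n p))) =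
        (if ((0 : Fin (n+1)) : ℕ) ≤ 2*n-1- Yv n p (k1 n p) - k1 n p then p (fidx n (k1 n p)) else q 0)
      rw [hthr, if_neg (by simp [Fin.last]; omega), if_pos (by simp)]
  have hP'app : ∀ s : Fin (n+1), (s : ℕ) ≤ K → P' s = p s := by
    intro s hs
    show (if (s : ℕ) ≤ k1 n p then p s else _) = p s
    rw [if_pos hs]
  have hQ'app : ∀ s : Fin (n+1), k' < (s : ℕ) → Q' s = q s := by
    intro s hs
    show (if (s : ℕ) ≤ 2 * n - 1 - Yv n p (k1 n p) - k1 n p then _ else q s) = q s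
    rw [hthr, if_neg (by omega)]
  have hfq' : HasFall n Q' := by
    refine ⟨k', ?_⟩
    rw [vQ' (k' + 1) (by omega), vQ' k' (by omega), if_neg (by omega), if_pos le_rfl,
      hQ5 (k' + 1) le_rfl]
  have hk2Q' : k2 n Q' = k' := by
    have hmem : Yv n Q' (k' + 1) + 1 = Yv n Q' k' := by
      rw [vQ' (k' + 1) (by omega), vQ' k' (by omega), if_neg (by omega), if_pos le_rfl,
        hQ5 (k' + 1) le_rfl]
    have hle : k2 n Q' ≤ k' :=
      Nat.sInf_le (s := {k | Yv n Q' (k + 1) + 1 = Yv n Q' k}) hmem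
    have hf2 := k2_fall hfq'
    rcases Nat.lt_or_ge (k2 n Q') k' with hlt | hge
    · exfalso
      rw [vQ' (k2 n Q' + 1) (by omega), vQ' (k2 n Q') (by omega), if_pos (by omega),
        if_pos (by omega)] at hf2
      omega
    · omega
  have hQ'0 : Yv n Q' 0 = m + 1 := by rw [vQ' 0 (by omega), if_pos (by omega)]
  have hQ'k2 : Yv n Q' (k2 n Q') = m + 1 := by rw [hk2Q', vQ' k' (by omega), if_pos le_rfl]
  have hP'n : Yv n P' n = m + 1 := by rw [vP' n le_rfl, if_neg (by omega)]
  -- every fall of `P'` is a fall of `p` strictly below `K`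
  have hfallP' : ∀ k, (Yv n P' (k + 1) + 1 = Yv n P' k) →
      k < K ∧ (Yv n p (k + 1) + 1 = Yv n p k) := by
    intro k hkf
    have hkn := fall_lt hkf
    rw [vP' (k + 1) (by omega), vP' k (by omega)] at hkf
    rcases Nat.lt_trichotomy k K with h1 | h1 | h1
    · rw [if_pos (by omega), if_pos (by omega)] at hkf; exact ⟨h1, hkf⟩
    · rw [if_neg (by omega), if_pos (by omega), h1, hKval] at hkf; omega
    · rw [if_neg (by omega), if_neg (by omega)] at hkf; omega
  have hnotD : ¬ Dec n (P', Q') := by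
    rintro ⟨hfp', hor⟩
    dsimp only at hfp' hor
    rcases hor with hc | hc
    · exact hc hfq'
    · rw [hk2Q', hP'n] at hc
      obtain ⟨hK1lt, hK1fall⟩ := hfallP' _ (k1_fall hfp')
      omega
  have hthr2 : 2 * n - 1 - k2 n Q' - Yv n Q' (k2 n Q') = K := by
    rw [hQ'k2, hk2Q']; omega
  have hfid : ((fidx n (k2 n Q' + 1) : Fin (n + 1)) : ℕ) = k' + 1 := by
    rw [hk2Q']; show min (k' + 1) n = k' + 1; omega
  have hQfidval : (q (fidx n (k2 n Q' + 1)) : ℕ) = m := by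
    show Yv n q (k2 n Q' + 1) = m
    rw [hk2Q']; exact hQ5 (k' + 1) le_rfl
  have hback : moveP n (P', Q') = (p, q) := by
    have hQfid : Q' (fidx n (k2 n Q' + 1)) = q (fidx n (k2 n Q' + 1)) :=
      hQ'app _ (by rw [hfid]; omega)
    apply Prod.ext
    · funext s
      show (if (s : ℕ) ≤ 2 * n - 1 - k2 n Q' - Yv n Q' (k2 n Q')
        then P' s else Q' (fidx n (k2 n Q' + 1))) = p s
      rw [hthr2]
      by_cases hsK : (s : ℕ) ≤ K
      · rw [if_pos hsK]; exact hP'app s hsK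
      · rw [if_neg hsK, hQfid]
        apply Fin.val_injective
        rw [hQfidval]
        have : (p s : ℕ) = Yv n p (s : ℕ) := (Yv_coe p s).symm
        rw [this, hKtail (s : ℕ) (by omega)]
    · funext s
      show (if (s : ℕ) ≤ k2 n Q' then Q' (fidx n (k2 n Q' + 1)) else Q' s) = q s
      by_cases hsk : (s : ℕ) ≤ k2 n Q'
      · rw [if_pos hsk, hQfid]
        apply Fin.val_injective
        rw [hQfidval]
        have : (q s : ℕ) = Yv n q (s : ℕ) := (Yv_coe q s).symm
        rw [this, hQ5 (s : ℕ) (by rw [hk2Q'] at hsk; omega)]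
      · rw [if_neg hsk]
        exact hQ'app s (by rw [hk2Q'] at hsk; omega)
  have hKmem : K ∈ Finset.range n := Finset.mem_range.2 hK
  have hk'mem : k' ∈ Finset.range n := Finset.mem_range.2 hk'n
  have hw1 : lweight n t p = t (m + 1) (K + (m + 1) - n) * lweight n t P' := by
    rw [lweight_eq, lweight_eq,
      ← Finset.mul_prod_erase _ _ hKmem, ← Finset.mul_prod_erase _ _ hKmem]
    have e1 : (if Yv n p (K + 1) + 1 = Yv n p K
        then t (Yv n p K) (K + Yv n p K - n) else 1) = t (m + 1) (K + (m + 1) - n) := by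
      rw [if_pos hKf, hKval]
    have e2 : (if Yv n P' (K + 1) + 1 = Yv n P' K
        then t (Yv n P' K) (K + Yv n P' K - n) else 1) = 1 := by
      rw [if_neg]
      rw [vP' (K + 1) (by omega), vP' K (by omega), if_neg (by omega), if_pos le_rfl, hKval]
      omega
    rw [e1, e2, one_mul]
    congr 1
    apply Finset.prod_congr rfl
    intro k hk
    have hkK : k ≠ K := (Finset.mem_erase.1 hk).1
    have hkn : k < n := Finset.mem_range.1 (Finset.mem_erase.1 hk).2
    rcases Nat.lt_or_ge k K with h1 | h1
    · have r1 : Yv n P' (k + 1) = Yv n p (k + 1) := by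
        rw [vP' (k + 1) (by omega), if_pos (by omega)]
      have r2 : Yv n P' k = Yv n p k := by rw [vP' k (by omega), if_pos (by omega)]
      rw [r1, r2]
    · have h1' : K < k := by omega
      have l1 : ¬ (Yv n p (k + 1) + 1 = Yv n p k) := k1_max h1'
      have l2 : ¬ (Yv n P' (k + 1) + 1 = Yv n P' k) := by
        rw [vP' (k + 1) (by omega), vP' k (by omega), if_neg (by omega), if_neg (by omega)]
        omega
      rw [if_neg l1, if_neg l2]
  have hw2 : linvweight n t Q' = -t (m + 1) (K + (m + 1) - n) * linvweight n t q := by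
    rw [linvweight_eq, linvweight_eq,
      ← Finset.mul_prod_erase _ _ hk'mem, ← Finset.mul_prod_erase _ _ hk'mem]
    have e1 : (if Yv n Q' (k' + 1) + 1 = Yv n Q' k'
        then -t (Yv n Q' k') (n - k' - 1) else 1) = -t (m + 1) (K + (m + 1) - n) := by
      have hc : Yv n Q' (k' + 1) + 1 = Yv n Q' k' := by
        rw [vQ' (k' + 1) (by omega), vQ' k' (by omega), if_neg (by omega), if_pos le_rfl,
          hQ5 (k' + 1) le_rfl]
      rw [if_pos hc, vQ' k' (by omega), if_pos le_rfl,
        show n - k' - 1 = K + (m + 1) - n by omega]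
    have e2 : (if Yv n q (k' + 1) + 1 = Yv n q k'
        then -t (Yv n q k') (n - k' - 1) else 1) = 1 := by
      rw [if_neg]
      rw [hQ5 (k' + 1) le_rfl, hQ5 k' (by omega)]
      omega
    rw [e1, e2, one_mul]
    congr 1
    apply Finset.prod_congr rfl
    intro k hk
    have hkk' : k ≠ k' := (Finset.mem_erase.1 hk).1
    have hkn : k < n := Finset.mem_range.1 (Finset.mem_erase.1 hk).2
    rcases Nat.lt_or_ge k k' with h1 | h1
    · have l1 : ¬ (Yv n Q' (k + 1) + 1 = Yv n Q' k) := by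
        rw [vQ' (k + 1) (by omega), vQ' k (by omega), if_pos (by omega), if_pos (by omega)]
        omega
      have l2 : ¬ (Yv n q (k + 1) + 1 = Yv n q k) := by
        rw [hQ5 (k + 1) (by omega), hQ5 k (by omega)]
        omega
      rw [if_neg l1, if_neg l2]
    · have r1 : Yv n Q' (k + 1) = Yv n q (k + 1) := by
        rw [vQ' (k + 1) (by omega), if_neg (by omega)]
      have r2 : Yv n Q' k = Yv n q k := by rw [vQ' k (by omega), if_neg (by omega)]
      rw [r1, r2]
  have hne : Q' ≠ q := by
    intro he
    rw [he] at hQ'0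
    rw [← hlink] at hQ'0
    omega
  rw [hmove]
  refine ⟨hgood, hnotD, hback, ?_, hne⟩
  show lweight n t p * linvweight n t q + lweight n t P' * linvweight n t Q' = 0
  rw [hw1, hw2]
  ring


lemma moveP_spec (t : ℕ → ℕ → R) {i j : Fin (n + 1)} {p q : Fin (n + 1) → Fin (n + 1)}
    (h : Good n i j (p, q)) (hfq : HasFall n q) (hnD : ¬ Dec n (p, q)) :
    Good n i j (moveP n (p, q)) ∧ Dec n (moveP n (p, q)) ∧
      moveQ n (moveP n (p, q)) = (p, q) ∧
      lweight n t p * linvweight n t q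
        + lweight n t (moveP n (p, q)).1 * linvweight n t (moveP n (p, q)).2 = 0 ∧
      (moveP n (p, q)).1 ≠ p := by
  obtain ⟨hp, hq, hp0, hqn, hlinkF⟩ := h
  dsimp only at hp hq hp0 hqn hlinkF
  have hlink : Yv n p n = Yv n q 0 := by
    rw [Yv_last, Yv_zero]; exact congrArg Fin.val hlinkF
  set m : ℕ := Yv n q 0 with hm
  set k₂ : ℕ := k2 n q with hk2def
  have hk2 : k₂ < n := k2_lt hfq
  have hhead : ∀ s, s ≤ k₂ → Yv n q s = m := fun s hs => k2_head hq hs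
  have hfall2 : Yv n q (k₂ + 1) + 1 = m := k2_val hq hfq
  have hvalid2 : n ≤ k₂ + m := k2_valid hq hfq
  have hm1 : 1 ≤ m := by omega
  have hmn : m ≤ n := hm ▸ Yv_le q 0
  set kp : ℕ := 2 * n - 1 - k₂ - m with hkpdef
  have hthr : 2 * n - 1 - k2 n q - Yv n q (k2 n q) = kp := by
    rw [hhead k₂ le_rfl]
  have hkpn : kp < n := by omega
  have hptail : ∀ s, kp ≤ s → Yv n p s = m := by
    intro s hs
    rw [Dec, not_and_or] at hnD
    rcases hnD with hc | hc
    · dsimp only at hc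
      rw [not_hasFall_const hp hc s, ← not_hasFall_const hp hc n, hlink]
    · push_neg at hc
      dsimp only at hc
      obtain ⟨-, hc⟩ := hc
      by_cases hfp : HasFall n p
      · have hKvalid : n ≤ k1 n p + m + 1 := by
          have := k1_valid hp hfp
          rw [hlink] at this
          exact this
        rw [hlink] at hc
        have hK : k1 n p < kp := by omega
        rw [k1_tail hp hfp (by omega), hlink]
      · rw [not_hasFall_const hp hfp s, ← not_hasFall_const hp hfp n, hlink]
  -- the modified pair
  set P' : Fin (n + 1) → Fin (n + 1) :=
    fun s => if (s : ℕ) ≤ 2 * n - 1 - k2 n q - Yv n q (k2 n q)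
      then p s else q (fidx n (k2 n q + 1)) with hP'def
  set Q' : Fin (n + 1) → Fin (n + 1) :=
    fun s => if (s : ℕ) ≤ k2 n q then q (fidx n (k2 n q + 1)) else q s with hQ'def
  have hmove : moveP n (p, q) = (P', Q') := rfl
  have hvfid : (q (fidx n (k2 n q + 1)) : ℕ) = m - 1 := by
    have : Yv n q (k₂ + 1) = m - 1 := by omega
    exact this
  have vP' : ∀ s, s ≤ n → Yv n P' s = if s ≤ kp then Yv n p s else m - 1 := by
    intro s hs
    rw [hP'def, Yv_ite p _ _ hs, hthr]
    split
    · rfl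
    · exact hvfid
  have vQ' : ∀ s, s ≤ n → Yv n Q' s = if s ≤ k₂ then m - 1 else Yv n q s := by
    intro s hs
    rw [hQ'def, Yv_ite' q _ _ hs]
    split
    · exact hvfid
    · rfl
  have hp' : IsLPath n P' := by
    rw [isLPath_iff]
    intro k hk
    rw [vP' (k + 1) (by omega), vP' k (by omega)]
    rcases Nat.lt_trichotomy k kp with h1 | h1 | h1
    · rw [if_pos (by omega), if_pos (by omega)]
      exact (isLPath_iff p).1 hp k hk
    · rw [if_neg (by omega), if_pos (by omega), h1, hptail kp le_rfl]
      omega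
    · rw [if_neg (by omega), if_neg (by omega)]
      omega
  have hq' : IsLPath n Q' := by
    rw [isLPath_iff]
    intro k hk
    rw [vQ' (k + 1) (by omega), vQ' k (by omega)]
    rcases Nat.lt_trichotomy k k₂ with h1 | h1 | h1
    · rw [if_pos (by omega), if_pos (by omega)]
      omega
    · rw [if_neg (by omega), if_pos (by omega), h1]
      omega
    · rw [if_neg (by omega), if_neg (by omega)]
      have := (isLPath_iff q).1 hq k hk
      omega
  have hgood : Good n i j (P', Q') := by
    refine ⟨hp', hq', ?_, ?_, ?_⟩
    · show (if ((0 : Fin (n+1)) : ℕ) ≤ 2 * n - 1 - k2 n q - Yv n q (k2 n q)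
        then p 0 else q (fidx n (k2 n q + 1))) = i
      rw [hthr, if_pos (by simp)]
      exact hp0
    · show (if ((Fin.last n : Fin (n+1)) : ℕ) ≤ k2 n q then _ else q (Fin.last n)) = j
      rw [if_neg (by simp [Fin.last]; omega)]
      exact hqn
    · show (if ((Fin.last n : Fin (n+1)) : ℕ) ≤ 2 * n - 1 - k2 n q - Yv n q (k2 n q)
          then p (Fin.last n) else q (fidx n (k2 n q + 1))) =
        (if ((0 : Fin (n+1)) : ℕ) ≤ k2 n q then q (fidx n (k2 n q + 1)) else q 0)
      rw [hthr, if_neg (by simp [Fin.last]; omega), if_pos (by simp)]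
  have hfP' : Yv n P' (kp + 1) + 1 = Yv n P' kp := by
    rw [vP' (kp + 1) (by omega), vP' kp (by omega), if_neg (by omega), if_pos le_rfl,
      hptail kp le_rfl]
    omega
  have hfp' : HasFall n P' := ⟨kp, hfP'⟩
  have hk1P' : k1 n P' = kp := by
    classical
    have hge : kp ≤ k1 n P' :=
      Nat.le_findGreatest (P := fun k => Yv n P' (k + 1) + 1 = Yv n P' k)
        (le_of_lt hkpn) hfP'
    have hf1 := k1_fall hfp'
    rcases Nat.lt_or_ge kp (k1 n P') with hlt | hge2
    · exfalso
      have hn1 := k1_lt hfp'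
      rw [vP' (k1 n P' + 1) (by omega), vP' (k1 n P') (by omega), if_neg (by omega),
        if_neg (by omega)] at hf1
      omega
    · omega
  have hP'n : Yv n P' n = m - 1 := by rw [vP' n le_rfl, if_neg (by omega)]
  have hP'kp : Yv n P' kp = m := by rw [vP' kp (by omega), if_pos le_rfl, hptail kp le_rfl]
  -- every fall of `Q'` is a fall of `q` strictly above `k₂`
  have hfallQ' : ∀ k, (Yv n Q' (k + 1) + 1 = Yv n Q' k) → k₂ < k ∧ k < n := by
    intro k hkf
    have hkn := fall_lt hkf
    rw [vQ' (k + 1) (by omega), vQ' k (by omega)] at hkf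
    rcases Nat.lt_trichotomy k k₂ with h1 | h1 | h1
    · rw [if_pos (by omega), if_pos (by omega)] at hkf; omega
    · rw [if_neg (by omega), if_pos (by omega), h1] at hkf; omega
    · exact ⟨h1, hkn⟩
  have hD' : Dec n (P', Q') := by
    refine ⟨hfp', ?_⟩
    dsimp only
    by_cases hfq' : HasFall n Q'
    · right
      rw [hk1P', hP'n]
      obtain ⟨hz1, hz2⟩ := hfallQ' _ (k2_fall hfq')
      omega
    · exact Or.inl hfq'
  have hthr2 : 2 * n - 1 - Yv n P' (k1 n P') - k1 n P' = k₂ := by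
    rw [hk1P', hP'kp]; omega
  have hfid2 : ((fidx n (k1 n P') : Fin (n + 1)) : ℕ) = kp := by
    rw [hk1P']; show min kp n = kp; omega
  have hP'fidval : (p (fidx n (k1 n P')) : ℕ) = m := by
    show Yv n p (k1 n P') = m
    rw [hk1P']; exact hptail kp le_rfl
  have hP'fid : P' (fidx n (k1 n P')) = p (fidx n (k1 n P')) := by
    have hc : ((fidx n (k1 n P') : Fin (n + 1)) : ℕ) ≤ 2 * n - 1 - k2 n q - Yv n q (k2 n q) := by
      rw [hfid2, hthr]
    exact if_pos hc
  have hback : moveQ n (P', Q') = (p, q) := by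
    apply Prod.ext
    · funext s
      show (if (s : ℕ) ≤ k1 n P' then P' s else P' (fidx n (k1 n P'))) = p s
      by_cases hs : (s : ℕ) ≤ k1 n P'
      · rw [if_pos hs]
        show (if (s : ℕ) ≤ 2 * n - 1 - k2 n q - Yv n q (k2 n q) then p s else _) = p s
        rw [hthr, if_pos (by rw [hk1P'] at hs; omega)]
      · rw [if_neg hs, hP'fid]
        apply Fin.val_injective
        rw [hP'fidval]
        have : (p s : ℕ) = Yv n p (s : ℕ) := (Yv_coe p s).symm
        rw [this, hptail (s : ℕ) (by rw [hk1P'] at hs; omega)]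
    · funext s
      show (if (s : ℕ) ≤ 2 * n - 1 - Yv n P' (k1 n P') - k1 n P'
        then P' (fidx n (k1 n P')) else Q' s) = q s
      rw [hthr2]
      by_cases hs : (s : ℕ) ≤ k₂
      · rw [if_pos hs, hP'fid]
        apply Fin.val_injective
        rw [hP'fidval]
        have : (q s : ℕ) = Yv n q (s : ℕ) := (Yv_coe q s).symm
        rw [this, hhead (s : ℕ) hs]
      · rw [if_neg hs]
        show (if (s : ℕ) ≤ k2 n q then _ else q s) = q s
        rw [if_neg hs]
  have hk2mem : k₂ ∈ Finset.range n := Finset.mem_range.2 hk2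
  have hkpmem : kp ∈ Finset.range n := Finset.mem_range.2 hkpn
  have hw1 : linvweight n t q = -t m (n - k₂ - 1) * linvweight n t Q' := by
    rw [linvweight_eq, linvweight_eq,
      ← Finset.mul_prod_erase _ _ hk2mem, ← Finset.mul_prod_erase _ _ hk2mem]
    have e1 : (if Yv n q (k₂ + 1) + 1 = Yv n q k₂
        then -t (Yv n q k₂) (n - k₂ - 1) else 1) = -t m (n - k₂ - 1) := by
      rw [if_pos (by rw [hhead k₂ le_rfl]; exact hfall2), hhead k₂ le_rfl]
    have e2 : (if Yv n Q' (k₂ + 1) + 1 = Yv n Q' k₂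
        then -t (Yv n Q' k₂) (n - k₂ - 1) else 1) = 1 := by
      rw [if_neg]
      rw [vQ' (k₂ + 1) (by omega), vQ' k₂ (by omega), if_neg (by omega), if_pos le_rfl]
      omega
    rw [e1, e2, one_mul]
    congr 1
    apply Finset.prod_congr rfl
    intro k hk
    have hkk : k ≠ k₂ := (Finset.mem_erase.1 hk).1
    have hkn : k < n := Finset.mem_range.1 (Finset.mem_erase.1 hk).2
    rcases Nat.lt_or_ge k k₂ with h1 | h1
    · have l1 : ¬ (Yv n q (k + 1) + 1 = Yv n q k) := by
        rw [hhead (k + 1) (by omega), hhead k (by omega)]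
        omega
      have l2 : ¬ (Yv n Q' (k + 1) + 1 = Yv n Q' k) := by
        rw [vQ' (k + 1) (by omega), vQ' k (by omega), if_pos (by omega), if_pos (by omega)]
        omega
      rw [if_neg l1, if_neg l2]
    · have h1' : k₂ < k := by omega
      have r1 : Yv n Q' (k + 1) = Yv n q (k + 1) := by
        rw [vQ' (k + 1) (by omega), if_neg (by omega)]
      have r2 : Yv n Q' k = Yv n q k := by rw [vQ' k (by omega), if_neg (by omega)]
      rw [r1, r2]
  have hw2 : lweight n t P' = t m (n - k₂ - 1) * lweight n t p := by
    rw [lweight_eq, lweight_eq,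
      ← Finset.mul_prod_erase _ _ hkpmem, ← Finset.mul_prod_erase _ _ hkpmem]
    have e1 : (if Yv n P' (kp + 1) + 1 = Yv n P' kp
        then t (Yv n P' kp) (kp + Yv n P' kp - n) else 1) = t m (n - k₂ - 1) := by
      rw [if_pos hfP', hP'kp, show kp + m - n = n - k₂ - 1 by omega]
    have e2 : (if Yv n p (kp + 1) + 1 = Yv n p kp
        then t (Yv n p kp) (kp + Yv n p kp - n) else 1) = 1 := by
      rw [if_neg]
      rw [hptail (kp + 1) (by omega), hptail kp le_rfl]
      omega
    rw [e1, e2, one_mul]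
    congr 1
    apply Finset.prod_congr rfl
    intro k hk
    have hkk : k ≠ kp := (Finset.mem_erase.1 hk).1
    have hkn : k < n := Finset.mem_range.1 (Finset.mem_erase.1 hk).2
    rcases Nat.lt_or_ge k kp with h1 | h1
    · have r1 : Yv n P' (k + 1) = Yv n p (k + 1) := by
        rw [vP' (k + 1) (by omega), if_pos (by omega)]
      have r2 : Yv n P' k = Yv n p k := by rw [vP' k (by omega), if_pos (by omega)]
      rw [r1, r2]
    · have h1' : kp < k := by omega
      have l1 : ¬ (Yv n P' (k + 1) + 1 = Yv n P' k) := by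
        rw [vP' (k + 1) (by omega), vP' k (by omega), if_neg (by omega), if_neg (by omega)]
        omega
      have l2 : ¬ (Yv n p (k + 1) + 1 = Yv n p k) := by
        rw [hptail (k + 1) (by omega), hptail k (by omega)]
        omega
      rw [if_neg l1, if_neg l2]
  have hne : P' ≠ p := by
    intro he
    rw [he] at hP'n
    rw [hlink] at hP'n
    omega
  rw [hmove]
  refine ⟨hgood, hD', hback, ?_, hne⟩
  show lweight n t p * linvweight n t q + lweight n t P' * linvweight n t Q' = 0
  rw [hw1, hw2]
  ring


lemma good_const (i : Fin (n + 1)) : Good n i i ((fun _ => i), (fun _ => i)) := by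
  have hlp : IsLPath n (fun _ : Fin (n + 1) => i) := by
    rw [isLPath_iff]
    intro k hk
    refine ⟨Or.inl rfl, fun h => ?_⟩
    rw [show Yv n (fun _ : Fin (n + 1) => i) (k + 1) = (i : ℕ) from rfl,
      show Yv n (fun _ : Fin (n + 1) => i) k = (i : ℕ) from rfl] at h
    omega
  exact ⟨hlp, hlp, rfl, rfl, rfl⟩

lemma good_diag {i : Fin (n + 1)} {pq : (Fin (n + 1) → Fin (n + 1)) × (Fin (n + 1) → Fin (n + 1))}
    (h : Good n i i pq) : pq = ((fun _ => i), (fun _ => i)) := by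
  obtain ⟨p, q⟩ := pq
  obtain ⟨hp, hq, hp0, hqn, hlinkF⟩ := h
  dsimp only at hp hq hp0 hqn hlinkF
  have h1 : Yv n p 0 = (i : ℕ) := by rw [Yv_zero, hp0]
  have h2 : Yv n q n = (i : ℕ) := by rw [Yv_last, hqn]
  have h3 : Yv n p n = Yv n q 0 := by
    rw [Yv_last, Yv_zero]; exact congrArg Fin.val hlinkF
  have hqs : ∀ s : ℕ, s ≤ n → Yv n q s = (i : ℕ) := by
    intro s hs
    have a1 := Yv_mono hq (Nat.zero_le s)
    have a2 := Yv_mono hq hs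
    have a3 := Yv_mono hp (Nat.zero_le n)
    omega
  have hps : ∀ s : ℕ, s ≤ n → Yv n p s = (i : ℕ) := by
    intro s hs
    have a1 := Yv_mono hp (Nat.zero_le s)
    have a2 := Yv_mono hp hs
    have a4 := hqs 0 (Nat.zero_le n)
    omega
  have e1 : p = fun _ => i := by
    funext s
    apply Fin.val_injective
    have : (p s : ℕ) = Yv n p (s : ℕ) := (Yv_coe p s).symm
    rw [this, hps (s : ℕ) (Fin.is_le s)]
  have e2 : q = fun _ => i := by
    funext s
    apply Fin.val_injective
    have : (q s : ℕ) = Yv n q (s : ℕ) := (Yv_coe q s).symm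
    rw [this, hqs (s : ℕ) (Fin.is_le s)]
  rw [e1, e2]

lemma lweight_const (t : ℕ → ℕ → R) (i : Fin (n + 1)) :
    lweight n t (fun _ => i) = 1 := by
  rw [lweight_eq]
  apply Finset.prod_eq_one
  intro k _
  rw [if_neg]
  show ¬ ((i : ℕ) + 1 = (i : ℕ))
  omega

lemma linvweight_const (t : ℕ → ℕ → R) (i : Fin (n + 1)) :
    linvweight n t (fun _ => i) = 1 := by
  rw [linvweight_eq]
  apply Finset.prod_eq_one
  intro k _
  rw [if_neg]
  show ¬ ((i : ℕ) + 1 = (i : ℕ))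
  omega


variable (n)

open scoped Classical in
noncomputable def invol (pq : (Fin (n + 1) → Fin (n + 1)) × (Fin (n + 1) → Fin (n + 1))) :
    (Fin (n + 1) → Fin (n + 1)) × (Fin (n + 1) → Fin (n + 1)) :=
  if Dec n pq then moveQ n pq else moveP n pq

variable {n}

lemma invol_spec (t : ℕ → ℕ → R) {i j : Fin (n + 1)} (hij : (i : ℕ) ≠ (j : ℕ))
    {pq : (Fin (n + 1) → Fin (n + 1)) × (Fin (n + 1) → Fin (n + 1))}
    (hG : Good n i j pq) :
    Good n i j (invol n pq) ∧
      lweight n t pq.1 * linvweight n t pq.2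
        + lweight n t (invol n pq).1 * linvweight n t (invol n pq).2 = 0 ∧
      invol n (invol n pq) = pq ∧ invol n pq ≠ pq := by
  classical
  obtain ⟨p, q⟩ := pq
  by_cases hD : Dec n (p, q)
  · have S := moveQ_spec t hG hD
    have e : invol n (p, q) = moveQ n (p, q) := if_pos hD
    rw [e]
    refine ⟨S.1, S.2.2.2.1, ?_, ?_⟩
    · have e2 : invol n (moveQ n (p, q)) = moveP n (moveQ n (p, q)) := if_neg S.2.1
      rw [e2, S.2.2.1]
    · intro hc
      exact S.2.2.2.2 (congrArg Prod.snd hc)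
  · have hfq : HasFall n q := by
      by_contra hnf
      have hnfp : ¬ HasFall n p := fun hfp => hD ⟨hfp, Or.inl hnf⟩
      obtain ⟨hp, hq, hp0, hqn, hlinkF⟩ := hG
      dsimp only at hp hq hp0 hqn hlinkF
      apply hij
      have c1 : Yv n p n = Yv n p 0 := not_hasFall_const hp hnfp n
      have c2 : Yv n q n = Yv n q 0 := not_hasFall_const hq hnf n
      have l : Yv n p n = Yv n q 0 := by
        rw [Yv_last, Yv_zero]; exact congrArg Fin.val hlinkF
      have e1 : Yv n p 0 = (i : ℕ) := by rw [Yv_zero, hp0]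
      have e2 : Yv n q n = (j : ℕ) := by rw [Yv_last, hqn]
      omega
    have S := moveP_spec t hG hfq hD
    have e : invol n (p, q) = moveP n (p, q) := if_neg hD
    rw [e]
    refine ⟨S.1, S.2.2.2.1, ?_, ?_⟩
    · have e2 : invol n (moveP n (p, q)) = moveQ n (moveP n (p, q)) := if_pos S.2.1
      rw [e2, S.2.2.1]
    · intro hc
      exact S.2.2.2.2 (congrArg Prod.fst hc)

end LP

open Finset in
/-- The product of the weight matrix `L n` of the `L`-type network of order `n` with
the weight matrix `L⁻¹` of the same network under the inverse weighting is the
`(n+1) × (n+1)` identity matrix. -/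
theorem stmt15 {R : Type*} [CommRing R] (n : ℕ) (t : ℕ → ℕ → R) :
    Lmat n t * LinvMat n t = 1 := by
  classical
  ext i j
  rw [Matrix.mul_apply, Matrix.one_apply]
  have hstep : ∀ m : Fin (n + 1), Lmat n t i m * LinvMat n t m j
      = ∑ pq ∈ (univ.filter (fun pq : (Fin (n + 1) → Fin (n + 1)) × (Fin (n + 1) → Fin (n + 1)) =>
          LP.Good n i j pq)).filter (fun pq => pq.1 (Fin.last n) = m),
        lweight n t pq.1 * linvweight n t pq.2 := by
    intro m
    simp only [Lmat, LinvMat, Matrix.of_apply]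
    rw [Finset.sum_mul_sum, ← Finset.sum_product']
    apply Finset.sum_congr ?_ (fun _ _ => rfl)
    ext pq
    simp only [Finset.mem_product, Finset.mem_filter, Finset.mem_univ, true_and]
    simp only [LP.Good]
    constructor
    · rintro ⟨⟨h1, h2, h3⟩, ⟨h4, h5, h6⟩⟩
      exact ⟨⟨h1, h4, h2, h6, h3.trans h5.symm⟩, h3⟩
    · rintro ⟨⟨h1, h2, h3, h4, h5⟩, h6⟩
      exact ⟨⟨h1, h3, h6⟩, ⟨h2, h5.symm.trans h6, h4⟩⟩
  rw [Finset.sum_congr rfl (fun m _ => hstep m), Finset.sum_fiberwise]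
  by_cases hij : i = j
  · subst hij
    rw [if_pos rfl]
    have hT : (univ.filter (fun pq : (Fin (n + 1) → Fin (n + 1)) × (Fin (n + 1) → Fin (n + 1)) =>
        LP.Good n i i pq)) = {((fun _ => i), (fun _ => i))} := by
      ext pq
      simp only [mem_filter, mem_univ, true_and, mem_singleton]
      exact ⟨fun h => LP.good_diag h, fun h => h ▸ LP.good_const i⟩
    rw [hT, Finset.sum_singleton]
    show lweight n t (fun _ => i) * linvweight n t (fun _ => i) = 1
    rw [LP.lweight_const, LP.linvweight_const, one_mul]
  · rw [if_neg hij]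
    have hij' : (i : ℕ) ≠ (j : ℕ) := fun h => hij (Fin.val_injective h)
    apply Finset.sum_involution (fun pq _ => LP.invol n pq)
    · intro pq hmem
      exact ((LP.invol_spec t hij' (Finset.mem_filter.1 hmem).2).2.1)
    · intro pq hmem _
      exact ((LP.invol_spec t hij' (Finset.mem_filter.1 hmem).2).2.2.2)
    · intro pq hmem
      exact Finset.mem_filter.2 ⟨Finset.mem_univ _,
        (LP.invol_spec t hij' (Finset.mem_filter.1 hmem).2).1⟩
    · intro pq hmem
      exact ((LP.invol_spec t hij' (Finset.mem_filter.1 hmem).2).2.2.1)
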